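/- For all positive integers m, n and every BQAP1 instance (q, c, d), the average objective function value over all n^m·m^n feasible solutions equals (1/(m·n))·∑_{i,j,k,l} q i j k l + (1/n)·∑_{i,j} c i j + (1/m)·∑_{i,j} d i j. -/

import Mathlib

lemma sum_apply_eq {α β : Type*} [Fintype α] [DecidableEq α] [Fintype β] (i : α) (g : β → ℝ) :
    ∑ σ : α → β, g (σ i) = (Fintype.card β : ℝ)^(Fintype.card α - 1) * ∑ j, g j := by
  rw [← (Equiv.piSplitAt i (fun _ => β)).symm.sum_comp (fun σ => g (σ i))]
  simp [Fintype.sum_prod_type, Finset.sum_const, Fintype.card_fun, Finset.mul_sum]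

lemma sum_apply_eq2 {α β γ δ : Type*} [Fintype α] [DecidableEq α] [Fintype β]
    [Fintype γ] [DecidableEq γ] [Fintype δ] (i : α) (l : γ) (g : β → δ → ℝ) :
    ∑ σ : α → β, ∑ τ : γ → δ, g (σ i) (τ l)
      = (Fintype.card β : ℝ)^(Fintype.card α - 1) * (Fintype.card δ : ℝ)^(Fintype.card γ - 1)
        * ∑ j, ∑ k, g j k := by
  simp_rw [sum_apply_eq l, ← Finset.mul_sum, sum_apply_eq i (fun j => ∑ k, g j k)]
  ring



/-- Objective function of BQAP1: `σ i` is the column of the unique 1 in row `i` of `x`,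
`τ l` is the row of the unique 1 in column `l` of `y`. -/
noncomputable def f1 {m n : ℕ} (q : Fin m → Fin n → Fin m → Fin n → ℝ)
    (c d : Fin m → Fin n → ℝ) (σ : Fin m → Fin n) (τ : Fin n → Fin m) : ℝ :=
  (∑ i, ∑ l, q i (σ i) (τ l) l) + (∑ i, c i (σ i)) + (∑ l, d (τ l) l)

theorem average_value_BQAP1 (m n : ℕ) (hm : 0 < m) (hn : 0 < n)
    (q : Fin m → Fin n → Fin m → Fin n → ℝ) (c d : Fin m → Fin n → ℝ) :
    (∑ στ : (Fin m → Fin n) × (Fin n → Fin m), f1 q c d στ.1 στ.2) /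
        ((n : ℝ) ^ m * (m : ℝ) ^ n) =
      (1 / ((m : ℝ) * n)) * (∑ i, ∑ j, ∑ k, ∑ l, q i j k l)
        + (1 / (n : ℝ)) * (∑ i, ∑ j, c i j)
        + (1 / (m : ℝ)) * (∑ i, ∑ j, d i j) := by
  have key : ∑ στ : (Fin m → Fin n) × (Fin n → Fin m), f1 q c d στ.1 στ.2
      = (n:ℝ)^(m-1) * (m:ℝ)^(n-1) * (∑ i, ∑ j, ∑ k, ∑ l, q i j k l)
        + (m:ℝ)^n * ((n:ℝ)^(m-1) * (∑ i, ∑ j, c i j))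
        + (n:ℝ)^m * ((m:ℝ)^(n-1) * (∑ i, ∑ j, d i j)) := by
    simp only [f1, Fintype.sum_prod_type, Finset.sum_add_distrib]
    congr 1
    congr 1
    · -- q term
      have h1 : ∀ σ : Fin m → Fin n, ∑ τ : Fin n → Fin m, ∑ i, ∑ l, q i (σ i) (τ l) l
          = ∑ i, ∑ l, ∑ τ : Fin n → Fin m, q i (σ i) (τ l) l := by
        intro σ; rw [Finset.sum_comm]
        exact Finset.sum_congr rfl fun i _ => Finset.sum_comm
      simp_rw [h1]
      have h2 : ∑ σ : Fin m → Fin n, ∑ i, ∑ l, ∑ τ : Fin n → Fin m, q i (σ i) (τ l) l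
          = ∑ i, ∑ l, ∑ σ : Fin m → Fin n, ∑ τ : Fin n → Fin m, q i (σ i) (τ l) l := by
        rw [Finset.sum_comm]
        exact Finset.sum_congr rfl fun i _ => Finset.sum_comm
      rw [h2]
      simp_rw [fun i l => sum_apply_eq2 i l (fun j k => q i j k l), Finset.mul_sum]
      simp only [Fintype.card_fin]
      refine Finset.sum_congr rfl fun i _ => ?_
      rw [Finset.sum_comm]
      exact Finset.sum_congr rfl fun j _ => Finset.sum_comm
    · -- c term
      have : ∀ σ : Fin m → Fin n, ∑ _τ : Fin n → Fin m, ∑ i, c i (σ i)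
          = (m:ℝ)^n * ∑ i, c i (σ i) := by
        intro σ; simp [Finset.sum_const, Fintype.card_fun]
      simp_rw [this, ← Finset.mul_sum]
      congr 1
      rw [Finset.sum_comm]
      simp_rw [fun i => sum_apply_eq i (c i)]
      simp [Finset.mul_sum]
    · -- d term
      rw [Finset.sum_comm]
      have : ∀ τ : Fin n → Fin m, ∑ _σ : Fin m → Fin n, ∑ l, d (τ l) l
          = (n:ℝ)^m * ∑ l, d (τ l) l := by
        intro τ; simp [Finset.sum_const, Fintype.card_fun]
      simp_rw [this, ← Finset.mul_sum]
      congr 1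
      rw [Finset.sum_comm]
      simp_rw [fun l => sum_apply_eq l (fun k => d k l)]
      simp only [Fintype.card_fin, Finset.mul_sum]
      exact Finset.sum_comm
  rw [key]
  have hm' : (m:ℝ) ≠ 0 := Nat.cast_ne_zero.2 hm.ne'
  have hn' : (n:ℝ) ≠ 0 := Nat.cast_ne_zero.2 hn.ne'
  have em : (m:ℝ)^n = (m:ℝ)^(n-1) * m := by
    rw [← pow_succ, Nat.sub_add_cancel hn]
  have en : (n:ℝ)^m = (n:ℝ)^(m-1) * n := by
    rw [← pow_succ, Nat.sub_add_cancel hm]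
  rw [em, en]
  field_simp
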